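/- Fix a simple root α and i ≥ 1, and let Δ_α(i) = {γ ∈ Δ⁺ : ht_α(γ) = i}, where ht_α(γ) is the coefficient of α in γ. If Δ_α(i) is nonempty, then it is a modular lattice under the root order: it has a unique minimal element, a unique maximal element, and for γ₁, γ₂ ∈ Δ_α(i) both min(γ₁,γ₂) and max(γ₁,γ₂) (coefficientwise) are roots in Δ_α(i), giving meet and join. -/

import Mathlib

open scoped RealInnerProductSpace

/-- Combinatorial data of the set of positive roots of a (reduced, irreducible,
crystallographic) root system of a simple Lie algebra, with a chosen set of
simple roots, sitting in a real inner product space `V`. -/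
structure SimpleRS (V : Type*) [NormedAddCommGroup V] [InnerProductSpace ℝ V] where
  /-- the positive roots Δ⁺ -/
  pos : Finset V
  /-- the simple roots Π -/
  simple : Finset V
  simple_sub : simple ⊆ pos
  indep : LinearIndependent ℝ (fun α : {x // x ∈ simple} => (α : V))
  root_ne : ∀ γ ∈ pos, γ ≠ (0 : V)
  /-- `coeff γ α` is the coefficient of the simple root `α` in `γ` -/
  coeff : V → V → ℕ
  coeff_spec : ∀ γ ∈ pos, γ = ∑ α ∈ simple, (coeff γ α : ℝ) • α
  /-- the reflection of a root in a root is again a root (positive or negative) -/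
  reflect_mem : ∀ α ∈ pos, ∀ γ ∈ pos,
    (γ - (2 * ⟪γ, α⟫ / ⟪α, α⟫) • α ∈ pos ∨ -(γ - (2 * ⟪γ, α⟫ / ⟪α, α⟫) • α) ∈ pos)
  crystallographic : ∀ α ∈ pos, ∀ γ ∈ pos, ∃ z : ℤ, 2 * ⟪γ, α⟫ / ⟪α, α⟫ = (z : ℝ)
  reduced : ∀ α ∈ pos, (2 : ℝ) • α ∉ pos
  /-- irreducibility: the Dynkin diagram is connected -/
  irreducible : ∀ S ⊆ simple, (∀ α ∈ S, ∀ β ∈ simple, β ∉ S → ⟪α, β⟫ = 0) →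
      S = ∅ ∨ S = simple
  /-- the highest root θ -/
  highest : V
  highest_mem : highest ∈ pos
  highest_spec : ∀ γ ∈ pos, ∃ c : V → ℕ, highest - γ = ∑ α ∈ simple, (c α : ℝ) • α

namespace SimpleRS

variable {V : Type*} [NormedAddCommGroup V] [InnerProductSpace ℝ V] (R : SimpleRS V)

/-- the root order: `μ ≼ ν` iff `ν − μ` is a nonnegative integral combination
of simple roots -/
def rle (μ ν : V) : Prop := ∃ c : V → ℕ, ν - μ = ∑ α ∈ R.simple, (c α : ℝ) • α

/-- the support of a root: simple roots occurring with nonzero coefficient -/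
def supp (γ : V) : Set V := {α | α ∈ R.simple ∧ R.coeff γ α ≠ 0}

/-- the height of a root -/
def ht (γ : V) : ℕ := ∑ α ∈ R.simple, R.coeff γ α

/-- the root system is of type `A_n`: its Dynkin diagram is a simply laced chain -/
def IsTypeA : Prop :=
  ∃ (n : ℕ) (e : Fin n ≃ {x // x ∈ R.simple}),
    (∀ i j : Fin n, ⟪(e i : V), (e j : V)⟫ ≠ 0 ↔ ((i : ℤ) - (j : ℤ)).natAbs ≤ 1) ∧
    (∀ i j : Fin n, ‖(e i : V)‖ = ‖(e j : V)‖)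

/-- all roots have the same length -/
def SimplyLaced : Prop := ∀ α ∈ R.pos, ∀ β ∈ R.pos, ‖α‖ = ‖β‖

/-- a positive root `γ` is commutative if the upper ideal it generates is abelian,
i.e. no two of its elements sum to a root -/
def IsCom (γ : V) : Prop :=
  ∀ ν₁ ∈ R.pos, ∀ ν₂ ∈ R.pos, R.rle γ ν₁ → R.rle γ ν₂ →
    ν₁ + ν₂ ∉ R.pos ∧ -(ν₁ + ν₂) ∉ R.pos

/-- the coefficientwise floor `⌊θ/2⌋` of half the highest root -/
def floorTheta : V := ∑ α ∈ R.simple, ((R.coeff R.highest α / 2 : ℕ) : ℝ) • α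

end SimpleRS


namespace SimpleRS

variable {V : Type*} [NormedAddCommGroup V] [InnerProductSpace ℝ V] (R : SimpleRS V)

/-- coefficients w.r.t. the simple roots are unique -/
lemma eq_on {g h : V → ℝ}
    (H : ∑ β ∈ R.simple, g β • β = ∑ β ∈ R.simple, h β • β) :
    ∀ β ∈ R.simple, g β = h β := by
  have h0 : ∑ β ∈ R.simple.attach, (g β.1 - h β.1) • (β.1 : V) = 0 := by
    simp only [sub_smul]
    rw [Finset.sum_sub_distrib,
      Finset.sum_attach R.simple (fun x => g x • x),
      Finset.sum_attach R.simple (fun x => h x • x), H]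
    abel
  have h1 := Fintype.linearIndependent_iff.mp R.indep (fun β => g β.1 - h β.1) ?_
  · intro β hβ
    have := h1 ⟨β, hβ⟩
    simpa [sub_eq_zero] using this
  · rw [← Finset.univ_eq_attach] at h0; exact h0

lemma expand {x : V} (hx : x ∈ R.pos) :
    x = ∑ β ∈ R.simple, (R.coeff x β : ℝ) • β := R.coeff_spec x hx

/-- the coefficient function is determined for positive roots -/
lemma coeff_det {x : V} (hx : x ∈ R.pos) (f : V → ℕ)
    (hxf : x = ∑ β ∈ R.simple, (f β : ℝ) • β) :
    ∀ β ∈ R.simple, R.coeff x β = f β := by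
  intro β hβ
  have := R.eq_on (g := fun β => (R.coeff x β : ℝ)) (h := fun β => (f β : ℝ))
    (by rw [← R.expand hx, ← hxf]) β hβ
  simpa using this

/-- a vector with some negative coefficient is not a positive root -/
lemma not_mem_neg {v : V} (g : V → ℤ) {β₀ : V} (hβ₀ : β₀ ∈ R.simple)
    (hneg : g β₀ < 0) (hv : v = ∑ β ∈ R.simple, (g β : ℝ) • β) : v ∉ R.pos := by
  intro hmem
  have := R.eq_on (g := fun β => (R.coeff v β : ℝ)) (h := fun β => (g β : ℝ))
    (by rw [← R.expand hmem, ← hv]) β₀ hβ₀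
  have : (R.coeff v β₀ : ℤ) = g β₀ := by exact_mod_cast this
  omega

lemma exists_pos_coeff {x : V} (hx : x ∈ R.pos) :
    ∃ β ∈ R.simple, 0 < R.coeff x β := by
  by_contra h
  push_neg at h
  apply R.root_ne x hx
  rw [R.expand hx]
  apply Finset.sum_eq_zero
  intro β hβ
  have : R.coeff x β = 0 := by have := h β hβ; omega
  simp [this]

lemma inner_self_pos' {x : V} (hx : x ∈ R.pos) : 0 < ⟪x, x⟫ := by
  have h1 : ⟪x, x⟫ ≠ 0 := fun h => R.root_ne x hx (inner_self_eq_zero.mp h)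
  have h2 : 0 ≤ ⟪x, x⟫ := real_inner_self_nonneg
  exact lt_of_le_of_ne h2 (Ne.symm h1)

/-- strict Cauchy-Schwarz -/
lemma strict_cs {x y : V} (hx : x ≠ 0) (hind : ∀ c : ℝ, y ≠ c • x) :
    ⟪x, y⟫ ^ 2 < ⟪x, x⟫ * ⟪y, y⟫ := by
  have h1 : ⟪x, y⟫ < ‖x‖ * ‖y‖ := by
    rw [inner_lt_norm_mul_iff_real]
    intro h
    have hx' : ‖x‖ ≠ 0 := norm_ne_zero_iff.mpr hx
    have h2 := congrArg (fun v => (‖x‖)⁻¹ • v) h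
    simp only [smul_smul, inv_mul_cancel₀ hx', one_smul] at h2
    exact hind _ h2.symm
  have h2 : -⟪x, y⟫ < ‖x‖ * ‖y‖ := by
    have := inner_lt_norm_mul_iff_real (x := x) (y := -y)
    rw [inner_neg_right, norm_neg] at this
    rw [this]
    intro h
    have hx' : ‖x‖ ≠ 0 := norm_ne_zero_iff.mpr hx
    have h2 := congrArg (fun v => -((‖x‖)⁻¹ • v)) h
    simp only [smul_neg, smul_smul, inv_mul_cancel₀ hx', one_smul, neg_neg] at h2
    exact hind _ (by rw [← h2, neg_smul])
  have habs : |⟪x, y⟫| < ‖x‖ * ‖y‖ := abs_lt.mpr ⟨by linarith, h1⟩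
  have := mul_self_lt_mul_self (abs_nonneg _) habs
  rw [abs_mul_abs_self] at this
  calc ⟪x, y⟫ ^ 2 = ⟪x, y⟫ * ⟪x, y⟫ := sq ⟪x, y⟫
    _ < (‖x‖ * ‖y‖) * (‖x‖ * ‖y‖) := this
    _ = ⟪x, x⟫ * ⟪y, y⟫ := by
        rw [real_inner_self_eq_norm_mul_norm, real_inner_self_eq_norm_mul_norm]; ring

end SimpleRS

namespace SimpleRS

open scoped Classical

variable {V : Type*} [NormedAddCommGroup V] [InnerProductSpace ℝ V] (R : SimpleRS V)

lemma single {β : V} (hβ : β ∈ R.simple) :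
    β = ∑ δ ∈ R.simple, ((if δ = β then (1:ℕ) else 0) : ℝ) • δ := by
  have : ∀ δ ∈ R.simple, ((if δ = β then (1:ℕ) else 0) : ℝ) • δ
      = (if δ = β then δ else 0) := by
    intro δ _
    split <;> simp
  rw [Finset.sum_congr rfl this, Finset.sum_ite_eq' R.simple β (fun δ => δ), if_pos hβ]

lemma not_smul_of_pos {x y : V} (hx : x ∈ R.pos) (hy : y ∈ R.pos)
    (hip : ⟪x, y⟫ < 0) : ∀ c : ℝ, y ≠ c • x := by
  intro c hc
  have hxx := R.inner_self_pos' hx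
  have hcneg : c < 0 := by
    have : ⟪x, y⟫ = c * ⟪x, x⟫ := by rw [hc, real_inner_smul_right]
    nlinarith
  obtain ⟨β₀, hβ₀, hβ₀pos⟩ := R.exists_pos_coeff hy
  have hyv : y = ∑ β ∈ R.simple, (c * (R.coeff x β : ℝ)) • β := by
    conv_lhs => rw [hc, R.expand hx]
    rw [Finset.smul_sum]
    exact Finset.sum_congr rfl (fun δ _ => by rw [smul_smul])
  have := R.eq_on (g := fun β => (R.coeff y β : ℝ)) (h := fun β => c * (R.coeff x β : ℝ))
    (by rw [← R.expand hy, ← hyv]) β₀ hβ₀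
  have h1 : (0:ℝ) < R.coeff y β₀ := by exact_mod_cast hβ₀pos
  have h2 : (0:ℝ) ≤ R.coeff x β₀ := Nat.cast_nonneg _
  nlinarith

/-- key dichotomy: positive inner product allows subtraction -/
lemma sub_mem {x y : V} (hx : x ∈ R.pos) (hy : y ∈ R.pos)
    (hip : 0 < ⟪x, y⟫) (hind : ∀ c : ℝ, y ≠ c • x) :
    x - y ∈ R.pos ∨ y - x ∈ R.pos := by
  have hx0 : x ≠ 0 := R.root_ne x hx
  have hsx := R.inner_self_pos' hx
  have hsy := R.inner_self_pos' hy
  obtain ⟨z₁, hz₁⟩ := R.crystallographic x hx y hy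
  obtain ⟨z₂, hz₂⟩ := R.crystallographic y hy x hx
  rw [real_inner_comm x y] at hz₁
  have hcs : ⟪x, y⟫ ^ 2 < ⟪x, x⟫ * ⟪y, y⟫ := strict_cs hx0 hind
  have hz₁pos : 1 ≤ z₁ := by
    have : (0:ℝ) < z₁ := hz₁ ▸ div_pos (by linarith) hsx
    exact_mod_cast this
  have hz₂pos : 1 ≤ z₂ := by
    have : (0:ℝ) < z₂ := hz₂ ▸ div_pos (by linarith) hsy
    exact_mod_cast this
  have hprod : z₁ * z₂ ≤ 3 := by
    have h4 : ((z₁ * z₂ : ℤ) : ℝ) < 4 := by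
      push_cast
      rw [← hz₁, ← hz₂, div_mul_div_comm, div_lt_iff₀ (by positivity)]
      nlinarith [hcs]
    have : (z₁ * z₂ : ℤ) < 4 := by exact_mod_cast h4
    omega
  have hcase : z₁ = 1 ∨ z₂ = 1 := by
    by_contra hcon
    push_neg at hcon
    have h1 : 2 ≤ z₁ := by omega
    have h2 : 2 ≤ z₂ := by omega
    nlinarith
  rcases hcase with h | h
  · have := R.reflect_mem x hx y hy
    rw [real_inner_comm x y] at this
    rw [hz₁, h] at this
    simp only [Int.cast_one, one_smul, neg_sub] at this
    tauto
  · have := R.reflect_mem y hy x hx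
    rw [hz₂, h] at this
    simp only [Int.cast_one, one_smul, neg_sub] at this
    tauto

/-- the negative of a sum of two positive roots is never a positive root -/
lemma neg_add_not_mem {x y : V} (hx : x ∈ R.pos) (hy : y ∈ R.pos) :
    -(x + y) ∉ R.pos := by
  obtain ⟨β₀, hβ₀, hβ₀pos⟩ := R.exists_pos_coeff hx
  apply R.not_mem_neg (g := fun β => -((R.coeff x β : ℤ) + (R.coeff y β : ℤ))) hβ₀
    (by show -((R.coeff x β₀ : ℤ) + (R.coeff y β₀ : ℤ)) < 0
        have : (0:ℤ) < R.coeff x β₀ := by exact_mod_cast hβ₀pos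
        omega)
  conv_lhs => rw [R.expand hx, R.expand hy]
  rw [← Finset.sum_add_distrib, ← Finset.sum_neg_distrib]
  apply Finset.sum_congr rfl
  intro δ _
  push_cast
  module

/-- negative inner product: the sum is a positive root -/
lemma add_mem {x y : V} (hx : x ∈ R.pos) (hy : y ∈ R.pos)
    (hip : ⟪x, y⟫ < 0) : x + y ∈ R.pos := by
  have hind := R.not_smul_of_pos hx hy hip
  have hx0 : x ≠ 0 := R.root_ne x hx
  have hsx := R.inner_self_pos' hx
  have hsy := R.inner_self_pos' hy
  obtain ⟨z₁, hz₁⟩ := R.crystallographic x hx y hy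
  obtain ⟨z₂, hz₂⟩ := R.crystallographic y hy x hx
  rw [real_inner_comm x y] at hz₁
  have hcs : ⟪x, y⟫ ^ 2 < ⟪x, x⟫ * ⟪y, y⟫ := strict_cs hx0 hind
  have hz₁neg : z₁ ≤ -1 := by
    have : (z₁:ℝ) < 0 := hz₁ ▸ div_neg_of_neg_of_pos (by linarith) hsx
    have : z₁ < 0 := by exact_mod_cast this
    omega
  have hz₂neg : z₂ ≤ -1 := by
    have : (z₂:ℝ) < 0 := hz₂ ▸ div_neg_of_neg_of_pos (by linarith) hsy
    have : z₂ < 0 := by exact_mod_cast this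
    omega
  have hprod : z₁ * z₂ ≤ 3 := by
    have h4 : ((z₁ * z₂ : ℤ) : ℝ) < 4 := by
      push_cast
      rw [← hz₁, ← hz₂, div_mul_div_comm, div_lt_iff₀ (by positivity)]
      nlinarith [hcs]
    have : (z₁ * z₂ : ℤ) < 4 := by exact_mod_cast h4
    omega
  have hcase : z₁ = -1 ∨ z₂ = -1 := by
    by_contra hcon
    push_neg at hcon
    have h1 : z₁ ≤ -2 := by omega
    have h2 : z₂ ≤ -2 := by omega
    nlinarith
  have hnn := R.neg_add_not_mem hx hy
  rcases hcase with h | h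
  · have := R.reflect_mem x hx y hy
    rw [real_inner_comm x y] at this
    rw [hz₁, h] at this
    simp only [Int.cast_neg, Int.cast_one, neg_smul, one_smul, sub_neg_eq_add] at this
    rcases this with h' | h'
    · rwa [add_comm]
    · rw [add_comm x y] at hnn
      exact absurd h' hnn
  · have := R.reflect_mem y hy x hx
    rw [hz₂, h] at this
    simp only [Int.cast_neg, Int.cast_one, neg_smul, one_smul, sub_neg_eq_add] at this
    rcases this with h' | h'
    · exact h'
    · exact absurd h' hnn

/-- distinct simple roots have nonpositive inner products -/
lemma simple_inner_nonpos {β β' : V} (hβ : β ∈ R.simple) (hβ' : β' ∈ R.simple)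
    (hne : β ≠ β') : ⟪β, β'⟫ ≤ 0 := by
  by_contra h
  push_neg at h
  have hβp : β ∈ R.pos := R.simple_sub hβ
  have hβ'p : β' ∈ R.pos := R.simple_sub hβ'
  have hind : ∀ c : ℝ, β' ≠ c • β := by
    intro c hc
    have hv : β' = ∑ δ ∈ R.simple, (c * ((if δ = β then (1:ℕ) else 0):ℝ)) • δ := by
      conv_lhs => rw [hc, R.single hβ]
      rw [Finset.smul_sum]
      exact Finset.sum_congr rfl (fun δ _ => by rw [smul_smul])
    have h1 := R.eq_on (g := fun δ => ((if δ = β' then (1:ℕ) else 0):ℝ))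
      (h := fun δ => c * ((if δ = β then (1:ℕ) else 0):ℝ))
      (by rw [← R.single hβ', ← hv]) β' hβ'
    simp only [if_pos rfl, if_neg (Ne.symm hne)] at h1
    norm_num at h1
  have hdiff : ∀ (b b' : V), b ∈ R.simple → b' ∈ R.simple →
      b - b' = ∑ δ ∈ R.simple,
        (((if δ = b then (1:ℤ) else 0) - (if δ = b' then 1 else 0) : ℤ) : ℝ) • δ := by
    intro b b' hb hb'
    conv_lhs => rw [R.single hb, R.single hb']
    rw [← Finset.sum_sub_distrib]
    apply Finset.sum_congr rfl
    intro δ _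
    rw [← sub_smul]
    congr 1
    push_cast
    ring
  rcases R.sub_mem hβp hβ'p h hind with h' | h'
  · exact R.not_mem_neg
      (g := fun δ => (if δ = β then (1:ℤ) else 0) - (if δ = β' then 1 else 0))
      hβ' (by simp [Ne.symm hne]) (hdiff β β' hβ hβ') h'
  · exact R.not_mem_neg
      (g := fun δ => (if δ = β' then (1:ℤ) else 0) - (if δ = β then 1 else 0))
      hβ (by simp [hne]) (hdiff β' β hβ' hβ) h'

end SimpleRS

namespace SimpleRS

variable {V : Type*} [NormedAddCommGroup V] [InnerProductSpace ℝ V] (R : SimpleRS V)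

/-- the vector with coefficient function `f` -/
def nvec (f : V → ℕ) : V := ∑ β ∈ R.simple, (f β : ℝ) • β

lemma expand' {x : V} (hx : x ∈ R.pos) : x = R.nvec (R.coeff x) := R.expand hx

lemma nvec_coeff {f : V → ℕ} (h : R.nvec f ∈ R.pos) :
    ∀ β ∈ R.simple, R.coeff (R.nvec f) β = f β :=
  R.coeff_det h f rfl

lemma nvec_congr {f g : V → ℕ} (h : ∀ β ∈ R.simple, f β = g β) :
    R.nvec f = R.nvec g :=
  Finset.sum_congr rfl (fun β hβ => by rw [h β hβ])

lemma nvec_add (f g : V → ℕ) :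
    R.nvec (fun β => f β + g β) = R.nvec f + R.nvec g := by
  rw [nvec, nvec, nvec, ← Finset.sum_add_distrib]
  apply Finset.sum_congr rfl
  intro δ _
  push_cast
  module

lemma nvec_sub {f g : V → ℕ} (h : ∀ β ∈ R.simple, g β ≤ f β) :
    R.nvec f - R.nvec g = R.nvec (fun β => f β - g β) := by
  rw [nvec, nvec, nvec, ← Finset.sum_sub_distrib]
  apply Finset.sum_congr rfl
  intro δ hδ
  rw [Nat.cast_sub (h δ hδ)]
  module

open scoped Classical in
lemma nvec_single {β : V} (hβ : β ∈ R.simple) :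
    R.nvec (fun δ => if δ = β then 1 else 0) = β := by
  rw [nvec]
  simp only [Nat.cast_ite, Nat.cast_zero]
  exact (R.single hβ).symm

lemma nvec_zero {f : V → ℕ} (h : R.nvec f = 0) : ∀ β ∈ R.simple, f β = 0 := by
  intro β hβ
  have := R.eq_on (g := fun β => (f β : ℝ)) (h := fun _ => (0:ℝ))
    (by rw [show ∑ β ∈ R.simple, (0:ℝ) • β = 0 by simp, ← h]; rfl) β hβ
  simpa using this

lemma inner_nvec_left (f : V → ℕ) (x : V) :
    ⟪R.nvec f, x⟫ = ∑ β ∈ R.simple, (f β : ℝ) * ⟪β, x⟫ := by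
  rw [nvec, sum_inner]
  exact Finset.sum_congr rfl (fun β _ => real_inner_smul_left β x _)

lemma exists_neg_inner {f : V → ℕ} {x : V} (h : ⟪R.nvec f, x⟫ < 0) :
    ∃ β ∈ R.simple, 0 < f β ∧ ⟪β, x⟫ < 0 := by
  rw [R.inner_nvec_left] at h
  by_contra hcon
  push_neg at hcon
  absurd h
  push_neg
  apply Finset.sum_nonneg
  intro β hβ
  rcases Nat.eq_zero_or_pos (f β) with h0 | h0
  · simp [h0]
  · have := hcon β hβ h0
    positivity

lemma exists_pos_inner {f : V → ℕ} {x : V} (h : 0 < ⟪R.nvec f, x⟫) :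
    ∃ β ∈ R.simple, 0 < f β ∧ 0 < ⟪β, x⟫ := by
  rw [R.inner_nvec_left] at h
  by_contra hcon
  push_neg at hcon
  absurd h
  push_neg
  apply Finset.sum_nonpos
  intro β hβ
  rcases Nat.eq_zero_or_pos (f β) with h0 | h0
  · simp [h0]
  · have h1 := hcon β hβ h0
    have h2 : (0:ℝ) ≤ f β := Nat.cast_nonneg _
    exact mul_nonpos_of_nonneg_of_nonpos h2 h1

/-- vectors with disjoint supports on the simple roots have `⟪,⟫ ≤ 0` -/
lemma inner_nvec_nvec_nonpos {f g : V → ℕ}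
    (h : ∀ β ∈ R.simple, ¬(0 < f β ∧ 0 < g β)) :
    ⟪R.nvec f, R.nvec g⟫ ≤ 0 := by
  rw [R.inner_nvec_left]
  apply Finset.sum_nonpos
  intro β hβ
  rcases Nat.eq_zero_or_pos (f β) with h0 | h0
  · simp [h0]
  have hfle : (0:ℝ) ≤ f β := Nat.cast_nonneg _
  apply mul_nonpos_of_nonneg_of_nonpos hfle
  rw [real_inner_comm, R.inner_nvec_left]
  apply Finset.sum_nonpos
  intro δ hδ
  rcases Nat.eq_zero_or_pos (g δ) with h1 | h1
  · simp [h1]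
  have hne : δ ≠ β := by
    intro he
    exact h β hβ ⟨h0, he ▸ h1⟩
  have := R.simple_inner_nonpos hδ hβ hne
  have hgle : (0:ℝ) ≤ g δ := Nat.cast_nonneg _
  exact mul_nonpos_of_nonneg_of_nonpos hgle this

open scoped Classical in
lemma sum_eq_one_support {f : V → ℕ} (h : ∑ β ∈ R.simple, f β = 1) :
    ∃ β₁ ∈ R.simple, f β₁ = 1 ∧ ∀ δ ∈ R.simple, δ ≠ β₁ → f δ = 0 := by
  have h0 : ∑ β ∈ R.simple, f β ≠ 0 := by omega
  obtain ⟨β₁, hβ₁, hfβ₁⟩ := Finset.exists_ne_zero_of_sum_ne_zero h0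
  have hsplit := Finset.add_sum_erase R.simple f hβ₁
  refine ⟨β₁, hβ₁, by omega, ?_⟩
  intro δ hδ hne
  have hrest : ∑ β ∈ R.simple.erase β₁, f β = 0 := by omega
  have := Finset.sum_eq_zero_iff.mp hrest δ (Finset.mem_erase.mpr ⟨hne, hδ⟩)
  exact this

end SimpleRS

namespace SimpleRS

open scoped Classical

variable {V : Type*} [NormedAddCommGroup V] [InnerProductSpace ℝ V] (R : SimpleRS V)

lemma inner_self_pos_of_ne {v : V} (h : v ≠ 0) : 0 < ⟪v, v⟫ :=
  lt_of_le_of_ne real_inner_self_nonneg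
    (fun h' => h (inner_self_eq_zero.mp h'.symm))

lemma smul_expand {x : V} (hx : x ∈ R.pos) (c : ℝ) :
    c • x = ∑ δ ∈ R.simple, (c * (R.coeff x δ : ℝ)) • δ := by
  conv_lhs => rw [R.expand hx]
  rw [Finset.smul_sum]
  exact Finset.sum_congr rfl (fun δ _ => by rw [smul_smul])

/-- a simple root different from a simple root in the support of `x` is not a
multiple of `x` -/
lemma simple_not_smul {x β α : V} (hx : x ∈ R.pos) (hα : α ∈ R.simple)
    (hβ : β ∈ R.simple) (hβα : β ≠ α) {i : ℕ} (hi : 1 ≤ i)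
    (hxa : R.coeff x α = i) : ∀ c : ℝ, β ≠ c • x := by
  intro c hc
  have h1 := R.eq_on (g := fun δ => ((if δ = β then (1:ℕ) else 0) : ℝ))
    (h := fun δ => c * (R.coeff x δ : ℝ))
    (by rw [← R.single hβ, ← R.smul_expand hx, ← hc]) α hα
  simp only [if_neg (Ne.symm hβα), hxa] at h1
  have hc0 : c = 0 := by
    have : (0:ℝ) = c * i := by exact_mod_cast h1
    have hi' : (i:ℝ) ≠ 0 := by positivity
    rcases mul_eq_zero.mp this.symm with h | h
    · exact h
    · exact absurd h hi'
  rw [hc0, zero_smul] at hc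
  exact R.root_ne β (R.simple_sub hβ) hc

/-- two distinct roots in the same `α`-layer are not proportional -/
lemma layer_not_smul {x y α : V} (hx : x ∈ R.pos) (hy : y ∈ R.pos)
    (hα : α ∈ R.simple) {i : ℕ} (hi : 1 ≤ i)
    (hxa : R.coeff x α = i) (hya : R.coeff y α = i)
    {β₁ : V} (hβ₁ : β₁ ∈ R.simple) (hne : R.coeff y β₁ ≠ R.coeff x β₁) :
    ∀ c : ℝ, y ≠ c • x := by
  intro c hc
  have h1 : ∀ δ ∈ R.simple, (R.coeff y δ : ℝ) = c * (R.coeff x δ : ℝ) :=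
    R.eq_on (g := fun δ => (R.coeff y δ : ℝ)) (h := fun δ => c * (R.coeff x δ : ℝ))
      (by rw [← R.expand hy, ← R.smul_expand hx, ← hc])
  have hc1 : c = 1 := by
    have h2 := h1 α hα
    rw [hxa, hya] at h2
    have hi' : (i:ℝ) ≠ 0 := by positivity
    have h3 : c * (i:ℝ) = 1 * (i:ℝ) := by rw [one_mul]; exact h2.symm
    exact mul_right_cancel₀ hi' h3
  apply hne
  have := h1 β₁ hβ₁
  rw [hc1, one_mul] at this
  exact_mod_cast this

/-- two roots in the same layer which differ have nonpositive inner product -/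
lemma layer_inner_nonpos {x y α : V} (hx : x ∈ R.pos) (hy : y ∈ R.pos)
    (hα : α ∈ R.simple) {i : ℕ} (hi : 1 ≤ i)
    (hxa : R.coeff x α = i) (hya : R.coeff y α = i)
    {β₁ β₂ : V} (hβ₁ : β₁ ∈ R.simple) (hβ₂ : β₂ ∈ R.simple)
    (h1 : R.coeff y β₁ < R.coeff x β₁) (h2 : R.coeff x β₂ < R.coeff y β₂) :
    ⟪x, y⟫ ≤ 0 := by
  by_contra h
  push_neg at h
  have hind := R.layer_not_smul hx hy hα hi hxa hya hβ₁ (by omega)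
  have hrep : x - y = ∑ δ ∈ R.simple, (((R.coeff x δ : ℤ) - (R.coeff y δ : ℤ) : ℤ) : ℝ) • δ := by
    conv_lhs => rw [R.expand hx, R.expand hy]
    rw [← Finset.sum_sub_distrib]
    apply Finset.sum_congr rfl
    intro δ _
    push_cast
    module
  have hrep' : y - x = ∑ δ ∈ R.simple, (((R.coeff y δ : ℤ) - (R.coeff x δ : ℤ) : ℤ) : ℝ) • δ := by
    conv_lhs => rw [R.expand hy, R.expand hx]
    rw [← Finset.sum_sub_distrib]
    apply Finset.sum_congr rfl
    intro δ _
    push_cast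
    module
  rcases R.sub_mem hx hy h hind with h' | h'
  · exact R.not_mem_neg (g := fun δ => (R.coeff x δ : ℤ) - (R.coeff y δ : ℤ))
      hβ₂ (by show (R.coeff x β₂ : ℤ) - (R.coeff y β₂ : ℤ) < 0; omega) hrep h'
  · exact R.not_mem_neg (g := fun δ => (R.coeff y δ : ℤ) - (R.coeff x δ : ℤ))
      hβ₁ (by show (R.coeff y β₁ : ℤ) - (R.coeff x β₁ : ℤ) < 0; omega) hrep' h'

/-- subtracting a simple root with positive inner product from a non-simple layer root -/
lemma step_sub {x β α : V} (hx : x ∈ R.pos) (hα : α ∈ R.simple)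
    (hβ : β ∈ R.simple) (hβα : β ≠ α) {i : ℕ} (hi : 1 ≤ i)
    (hxa : R.coeff x α = i) (hβ1 : 1 ≤ R.coeff x β) (hip : 0 < ⟪β, x⟫) :
    x - β ∈ R.pos ∧
      ∀ δ ∈ R.simple, R.coeff (x - β) δ = R.coeff x δ - (if δ = β then 1 else 0) := by
  have hind := R.simple_not_smul hx hα hβ hβα hi hxa
  have hrep : x - β = R.nvec (fun δ => R.coeff x δ - (if δ = β then 1 else 0)) := by
    rw [← R.nvec_sub (f := R.coeff x) (g := fun δ => if δ = β then 1 else 0)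
      (by intro δ hδ
          show (if δ = β then 1 else 0) ≤ R.coeff x δ
          by_cases hdb : δ = β
          · rw [if_pos hdb, hdb]; exact hβ1
          · rw [if_neg hdb]; omega)]
    congr 1
    · exact R.expand hx
    · exact (R.nvec_single hβ).symm
  have hmem : x - β ∈ R.pos := by
    rw [real_inner_comm] at hip
    rcases R.sub_mem hx (R.simple_sub hβ) hip hind with h' | h'
    · exact h'
    · exfalso
      have hrep' : β - x = ∑ δ ∈ R.simple,
          (((if δ = β then (1:ℤ) else 0) - (R.coeff x δ : ℤ) : ℤ) : ℝ) • δ := by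
        conv_lhs => rw [R.single hβ, R.expand hx]
        rw [← Finset.sum_sub_distrib]
        apply Finset.sum_congr rfl
        intro δ _
        push_cast
        split <;> module
      exact R.not_mem_neg (g := fun δ => (if δ = β then (1:ℤ) else 0) - (R.coeff x δ : ℤ))
        hα (by show ((if α = β then (1:ℤ) else 0) - (R.coeff x α : ℤ)) < 0
               rw [if_neg (Ne.symm hβα)]; omega) hrep' h'
  exact ⟨hmem, R.coeff_det hmem _ hrep⟩

/-- adding a simple root with negative inner product to a root -/
lemma step_add {x β : V} (hx : x ∈ R.pos) (hβ : β ∈ R.simple)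
    (hip : ⟪β, x⟫ < 0) :
    x + β ∈ R.pos ∧
      ∀ δ ∈ R.simple, R.coeff (x + β) δ = R.coeff x δ + (if δ = β then 1 else 0) := by
  have hmem : x + β ∈ R.pos := by
    rw [real_inner_comm] at hip
    exact R.add_mem hx (R.simple_sub hβ) hip
  have hrep : x + β = R.nvec (fun δ => R.coeff x δ + (if δ = β then 1 else 0)) := by
    rw [R.nvec_add (f := R.coeff x) (g := fun δ => if δ = β then 1 else 0)]
    congr 1
    · exact R.expand hx
    · exact (R.nvec_single hβ).symm
  exact ⟨hmem, R.coeff_det hmem _ hrep⟩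

lemma measure_split (u v : V → ℕ) :
    ∑ δ ∈ R.simple, (max (u δ) (v δ) - min (u δ) (v δ))
      = ∑ δ ∈ R.simple, (u δ - min (u δ) (v δ))
        + ∑ δ ∈ R.simple, (v δ - min (u δ) (v δ)) := by
  rw [← Finset.sum_add_distrib]
  apply Finset.sum_congr rfl
  intro δ _
  omega

lemma sum_step {t t' : V → ℕ} {β : V} (hβ : β ∈ R.simple)
    (hagree : ∀ δ ∈ R.simple, δ ≠ β → t' δ = t δ) (hdrop : t' β + 1 = t β) :
    ∑ δ ∈ R.simple, t' δ + 1 = ∑ δ ∈ R.simple, t δ := by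
  rw [← Finset.add_sum_erase _ t hβ, ← Finset.add_sum_erase _ t' hβ]
  have : ∑ δ ∈ R.simple.erase β, t' δ = ∑ δ ∈ R.simple.erase β, t δ := by
    apply Finset.sum_congr rfl
    intro δ hδ
    exact hagree δ (Finset.mem_of_mem_erase hδ) (Finset.ne_of_mem_erase hδ)
  omega

end SimpleRS

namespace SimpleRS

variable {V : Type*} [NormedAddCommGroup V] [InnerProductSpace ℝ V] (R : SimpleRS V)

lemma terminal_min {α x y β₁ β₂ : V} (hα : α ∈ R.simple) {i : ℕ} (hi : 1 ≤ i)
    (hx : x ∈ R.pos) (hy : y ∈ R.pos)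
    (hxa : R.coeff x α = i) (hya : R.coeff y α = i)
    (hβ₁ : β₁ ∈ R.simple) (hβ₂ : β₂ ∈ R.simple) (hne : β₁ ≠ β₂) (hβ₁α : β₁ ≠ α)
    (hdiff : x - y = β₁ - β₂) (hxy : ⟪x, y⟫ ≤ 0)
    (h1 : ⟪β₁, x⟫ ≤ 0) (h2 : ⟪β₂, y⟫ ≤ 0) : False := by
  have hy0 : y ≠ 0 := R.root_ne y hy
  have ht₂ : 0 < ⟪y, y⟫ := R.inner_self_pos' hy
  have hb₁ : 0 < ⟪β₁, β₁⟫ := R.inner_self_pos' (R.simple_sub hβ₁)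
  have hxeq : x = y + (β₁ - β₂) := by rw [← hdiff]; abel
  -- E2 : ⟪y, x⟫ = ⟪y,y⟫ + ⟪y,β₁⟫ - ⟪y,β₂⟫
  have e2 : ⟪y, x⟫ = ⟪y, y⟫ + (⟪y, β₁⟫ - ⟪y, β₂⟫) := by
    rw [hxeq, inner_add_right, inner_sub_right]
  have hyx : ⟪y, x⟫ ≤ 0 := by rw [real_inner_comm]; exact hxy
  have hyβ₂ : ⟪y, β₂⟫ ≤ 0 := by rw [real_inner_comm]; exact h2
  have hc1 : ⟪y, β₁⟫ ≤ -⟪y, y⟫ := by linarith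
  obtain ⟨z, hz⟩ := R.crystallographic β₁ (R.simple_sub hβ₁) y hy
  obtain ⟨w, hw⟩ := R.crystallographic y hy β₁ (R.simple_sub hβ₁)
  rw [real_inner_comm y β₁] at hw
  have hcs : ⟪y, β₁⟫ ^ 2 < ⟪y, y⟫ * ⟪β₁, β₁⟫ :=
    strict_cs hy0 (R.simple_not_smul hy hα hβ₁ hβ₁α hi hya)
  have hzneg : z ≤ -1 := by
    have : (z:ℝ) < 0 := hz ▸ div_neg_of_neg_of_pos (by linarith) hb₁
    have : z < 0 := by exact_mod_cast this
    omega
  have hwle : w ≤ -2 := by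
    have : (w:ℝ) ≤ -2 := by
      rw [← hw, div_le_iff₀ ht₂]
      linarith
    exact_mod_cast this
  have hzw : z * w ≤ 3 := by
    have h4 : ((z * w : ℤ) : ℝ) < 4 := by
      push_cast
      rw [← hz, ← hw, div_mul_div_comm, div_lt_iff₀ (by positivity)]
      nlinarith [hcs]
    have : (z * w : ℤ) < 4 := by exact_mod_cast h4
    omega
  have hzeq : z = -1 := by
    by_contra hcon
    have : z ≤ -2 := by omega
    nlinarith
  have hval : 2 * ⟪y, β₁⟫ = -⟪β₁, β₁⟫ := by
    have : (2 * ⟪y, β₁⟫ / ⟪β₁, β₁⟫) = -1 := by rw [hz, hzeq]; norm_num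
    field_simp at this
    linarith
  -- E3 : ⟪x,β₁⟫ = ⟪y,β₁⟫ + ⟪β₁,β₁⟫ - ⟪β₂,β₁⟫
  have e3 : ⟪x, β₁⟫ = ⟪y, β₁⟫ + (⟪β₁, β₁⟫ - ⟪β₂, β₁⟫) := by
    rw [hxeq, inner_add_left, inner_sub_left]
  have hq : ⟪β₂, β₁⟫ ≤ 0 := R.simple_inner_nonpos hβ₂ hβ₁ (Ne.symm hne)
  have hfin : ⟪x, β₁⟫ ≤ 0 := by rw [real_inner_comm]; exact h1
  nlinarith

lemma terminal_max {α x y β₁ β₂ : V} (hα : α ∈ R.simple) {i : ℕ} (hi : 1 ≤ i)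
    (hx : x ∈ R.pos) (hy : y ∈ R.pos)
    (hxa : R.coeff x α = i) (hya : R.coeff y α = i)
    (hβ₁ : β₁ ∈ R.simple) (hβ₂ : β₂ ∈ R.simple) (hne : β₁ ≠ β₂) (hβ₁α : β₁ ≠ α)
    (hdiff : x - y = β₁ - β₂) (hxy : ⟪x, y⟫ ≤ 0)
    (h1 : 0 ≤ ⟪β₁, y⟫) (h2 : 0 ≤ ⟪β₂, x⟫) : False := by
  have hx0 : x ≠ 0 := R.root_ne x hx
  have ht₁ : 0 < ⟪x, x⟫ := R.inner_self_pos' hx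
  have hb₁ : 0 < ⟪β₁, β₁⟫ := R.inner_self_pos' (R.simple_sub hβ₁)
  have hyeq : y = x - (β₁ - β₂) := by rw [← hdiff]; abel
  -- E1 : ⟪x, y⟫ = ⟪x,x⟫ - ⟪x,β₁⟫ + ⟪x,β₂⟫
  have e1 : ⟪x, y⟫ = ⟪x, x⟫ - (⟪x, β₁⟫ - ⟪x, β₂⟫) := by
    rw [hyeq, inner_sub_right, inner_sub_right]
  have hxβ₂ : 0 ≤ ⟪x, β₂⟫ := by rw [real_inner_comm]; exact h2
  have ha1 : ⟪x, x⟫ ≤ ⟪x, β₁⟫ := by linarith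
  obtain ⟨z, hz⟩ := R.crystallographic β₁ (R.simple_sub hβ₁) x hx
  obtain ⟨w, hw⟩ := R.crystallographic x hx β₁ (R.simple_sub hβ₁)
  rw [real_inner_comm x β₁] at hw
  have hcs : ⟪x, β₁⟫ ^ 2 < ⟪x, x⟫ * ⟪β₁, β₁⟫ :=
    strict_cs hx0 (R.simple_not_smul hx hα hβ₁ hβ₁α hi hxa)
  have hzpos : 1 ≤ z := by
    have : (0:ℝ) < z := hz ▸ div_pos (by linarith) hb₁
    exact_mod_cast this
  have hwge : 2 ≤ w := by
    have : (2:ℝ) ≤ w := by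
      rw [← hw, le_div_iff₀ ht₁]
      linarith
    exact_mod_cast this
  have hzw : z * w ≤ 3 := by
    have h4 : ((z * w : ℤ) : ℝ) < 4 := by
      push_cast
      rw [← hz, ← hw, div_mul_div_comm, div_lt_iff₀ (by positivity)]
      nlinarith [hcs]
    have : (z * w : ℤ) < 4 := by exact_mod_cast h4
    omega
  have hzeq : z = 1 := by
    by_contra hcon
    have : 2 ≤ z := by omega
    nlinarith
  have hval : 2 * ⟪x, β₁⟫ = ⟪β₁, β₁⟫ := by
    have : (2 * ⟪x, β₁⟫ / ⟪β₁, β₁⟫) = 1 := by rw [hz, hzeq]; norm_num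
    field_simp at this
    linarith
  -- E3 : ⟪y,β₁⟫ = ⟪x,β₁⟫ - ⟪β₁,β₁⟫ + ⟪β₂,β₁⟫
  have e3 : ⟪y, β₁⟫ = ⟪x, β₁⟫ - (⟪β₁, β₁⟫ - ⟪β₂, β₁⟫) := by
    rw [hyeq, inner_sub_left, inner_sub_left]
  have hq : ⟪β₂, β₁⟫ ≤ 0 := R.simple_inner_nonpos hβ₂ hβ₁ (Ne.symm hne)
  have hfin : 0 ≤ ⟪y, β₁⟫ := by rw [real_inner_comm]; exact h1
  nlinarith

end SimpleRS

namespace SimpleRS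

open scoped Classical

variable {V : Type*} [NormedAddCommGroup V] [InnerProductSpace ℝ V] (R : SimpleRS V)

/-- the distance between two roots, coefficientwise -/
def meas (x y : V) : ℕ :=
  ∑ δ ∈ R.simple, (max (R.coeff x δ) (R.coeff y δ) - min (R.coeff x δ) (R.coeff y δ))

lemma meas_comm (x y : V) : R.meas x y = R.meas y x := by
  apply Finset.sum_congr rfl
  intro δ _
  omega

lemma meas_eq (x y : V) :
    R.meas x y = ∑ δ ∈ R.simple, (R.coeff x δ - min (R.coeff x δ) (R.coeff y δ))
      + ∑ δ ∈ R.simple, (R.coeff y δ - min (R.coeff x δ) (R.coeff y δ)) :=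
  R.measure_split _ _

/-- the layer property at level `N` -/
def LP (α : V) (i N : ℕ) : Prop :=
  ∀ x y : V, x ∈ R.pos → y ∈ R.pos → R.coeff x α = i → R.coeff y α = i →
    R.meas x y ≤ N →
    R.nvec (fun δ => min (R.coeff x δ) (R.coeff y δ)) ∈ R.pos ∧
    R.nvec (fun δ => max (R.coeff x δ) (R.coeff y δ)) ∈ R.pos

/-- a subtractive move: preserves the min, lowers the max by `β` -/
lemma min_move_sub {α : V} (hα : α ∈ R.simple) {i N : ℕ} (hi : 1 ≤ i)
    (IH : R.LP α i N) {x y β : V} (hx : x ∈ R.pos) (hy : y ∈ R.pos)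
    (hxa : R.coeff x α = i) (hya : R.coeff y α = i) (hβ : β ∈ R.simple)
    (hlt : R.coeff y β < R.coeff x β) (hip : 0 < ⟪β, x⟫)
    (hmeas : R.meas x y ≤ N + 1) :
    R.nvec (fun δ => min (R.coeff x δ) (R.coeff y δ)) ∈ R.pos ∧
    R.nvec (fun δ => max (R.coeff x δ) (R.coeff y δ) - (if δ = β then 1 else 0)) ∈ R.pos := by
  have hβα : β ≠ α := by
    intro h
    rw [h, hxa, hya] at hlt
    omega
  obtain ⟨hx', hcoeff⟩ := R.step_sub hx hα hβ hβα hi hxa (by omega) hip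
  have hx'a : R.coeff (x - β) α = i := by
    rw [hcoeff α hα, if_neg (Ne.symm hβα), hxa]
    omega
  have hmeas' : R.meas (x - β) y ≤ N := by
    have hstep := R.sum_step (t := fun δ => max (R.coeff x δ) (R.coeff y δ)
        - min (R.coeff x δ) (R.coeff y δ))
      (t' := fun δ => max (R.coeff (x - β) δ) (R.coeff y δ)
        - min (R.coeff (x - β) δ) (R.coeff y δ)) hβ
      (by intro δ hδ hne
          rw [hcoeff δ hδ, if_neg hne]
          omega)
      (by
          rw [hcoeff β hβ, if_pos rfl]
          omega)
    have h1 : R.meas (x - β) y + 1 = R.meas x y := hstep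
    omega
  obtain ⟨P1, P2⟩ := IH (x - β) y hx' hy hx'a hya hmeas'
  constructor
  · rw [← R.nvec_congr (f := fun δ => min (R.coeff (x - β) δ) (R.coeff y δ))
      (by intro δ hδ
          rw [hcoeff δ hδ]
          by_cases hdb : δ = β
          · subst hdb; simp only [if_pos]; omega
          · simp only [if_neg hdb]; omega)]
    exact P1
  · rw [← R.nvec_congr (f := fun δ => max (R.coeff (x - β) δ) (R.coeff y δ))
      (by intro δ hδ
          rw [hcoeff δ hδ]
          by_cases hdb : δ = β
          · subst hdb; simp only [if_pos]; omega
          · simp only [if_neg hdb]; omega)]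
    exact P2

/-- an additive move: preserves the max, raises the min by `β` -/
lemma max_move_add {α : V} (hα : α ∈ R.simple) {i N : ℕ} (hi : 1 ≤ i)
    (IH : R.LP α i N) {x y β : V} (hx : x ∈ R.pos) (hy : y ∈ R.pos)
    (hxa : R.coeff x α = i) (hya : R.coeff y α = i) (hβ : β ∈ R.simple)
    (hlt : R.coeff y β < R.coeff x β) (hip : ⟪β, y⟫ < 0)
    (hmeas : R.meas x y ≤ N + 1) :
    R.nvec (fun δ => min (R.coeff x δ) (R.coeff y δ) + (if δ = β then 1 else 0)) ∈ R.pos ∧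
    R.nvec (fun δ => max (R.coeff x δ) (R.coeff y δ)) ∈ R.pos := by
  have hβα : β ≠ α := by
    intro h
    rw [h, hxa, hya] at hlt
    omega
  obtain ⟨hy', hcoeff⟩ := R.step_add hy hβ hip
  have hy'a : R.coeff (y + β) α = i := by
    rw [hcoeff α hα, if_neg (Ne.symm hβα), hya]
    omega
  have hmeas' : R.meas x (y + β) ≤ N := by
    have hstep := R.sum_step (t := fun δ => max (R.coeff x δ) (R.coeff y δ)
        - min (R.coeff x δ) (R.coeff y δ))
      (t' := fun δ => max (R.coeff x δ) (R.coeff (y + β) δ)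
        - min (R.coeff x δ) (R.coeff (y + β) δ)) hβ
      (by intro δ hδ hne
          rw [hcoeff δ hδ, if_neg hne]
          omega)
      (by
          rw [hcoeff β hβ, if_pos rfl]
          omega)
    have h1 : R.meas x (y + β) + 1 = R.meas x y := hstep
    omega
  obtain ⟨P1, P2⟩ := IH x (y + β) hx hy' hxa hy'a hmeas'
  constructor
  · rw [← R.nvec_congr (f := fun δ => min (R.coeff x δ) (R.coeff (y + β) δ))
      (by intro δ hδ
          rw [hcoeff δ hδ]
          by_cases hdb : δ = β
          · subst hdb; simp only [if_pos]; omega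
          · simp only [if_neg hdb]; omega)]
    exact P1
  · rw [← R.nvec_congr (f := fun δ => max (R.coeff x δ) (R.coeff (y + β) δ))
      (by intro δ hδ
          rw [hcoeff δ hδ]
          by_cases hdb : δ = β
          · subst hdb; simp only [if_pos]; omega
          · simp only [if_neg hdb]; omega)]
    exact P2

end SimpleRS

namespace SimpleRS

open scoped Classical

variable {V : Type*} [NormedAddCommGroup V] [InnerProductSpace ℝ V] (R : SimpleRS V)

lemma nvec_split (f g : V → ℕ) :
    R.nvec f = R.nvec (fun δ => min (f δ) (g δ))
      + R.nvec (fun δ => f δ - min (f δ) (g δ)) := by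
  rw [← R.nvec_add]
  exact R.nvec_congr (by intro δ _; omega)

lemma nvec_split' (f g : V → ℕ) :
    R.nvec g = R.nvec (fun δ => min (f δ) (g δ))
      + R.nvec (fun δ => g δ - min (f δ) (g δ)) := by
  rw [← R.nvec_add]
  exact R.nvec_congr (by intro δ _; omega)

lemma updn_nonpos (f g : V → ℕ) :
    ⟪R.nvec (fun δ => f δ - min (f δ) (g δ)),
     R.nvec (fun δ => g δ - min (f δ) (g δ))⟫ ≤ 0 :=
  R.inner_nvec_nvec_nonpos (by intro β _; omega)

lemma up_ne_zero {f g : V → ℕ} {β : V} (hβ : β ∈ R.simple) (hlt : g β < f β) :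
    R.nvec (fun δ => f δ - min (f δ) (g δ)) ≠ 0 := by
  intro h0
  have := R.nvec_zero h0 β hβ
  omega

/-- in the absence of subtractive moves on `x`, there is an additive move on `y` -/
lemma hard_witness {f g : V → ℕ}
    (hnA1 : ∀ β ∈ R.simple, g β < f β → ⟪β, R.nvec f⟫ ≤ 0)
    (hw : ∃ β ∈ R.simple, g β < f β) :
    ∃ β ∈ R.simple, g β < f β ∧ ⟪β, R.nvec g⟫ < 0 := by
  obtain ⟨βp, hβp, hβplt⟩ := hw
  have h1 : ⟪R.nvec (fun δ => f δ - min (f δ) (g δ)), R.nvec f⟫ ≤ 0 := by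
    rw [R.inner_nvec_left]
    apply Finset.sum_nonpos
    intro δ hδ
    rcases Nat.eq_zero_or_pos (f δ - min (f δ) (g δ)) with h0 | h0
    · simp [h0]
    · exact mul_nonpos_of_nonneg_of_nonpos (Nat.cast_nonneg _) (hnA1 δ hδ (by omega))
  have h2 : 0 < ⟪R.nvec (fun δ => f δ - min (f δ) (g δ)),
      R.nvec (fun δ => f δ - min (f δ) (g δ))⟫ :=
    inner_self_pos_of_ne (R.up_ne_zero hβp hβplt)
  rw [R.nvec_split f g, inner_add_right] at h1
  have h4 := R.updn_nonpos f g
  have h5 : ⟪R.nvec (fun δ => f δ - min (f δ) (g δ)), R.nvec g⟫ < 0 := by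
    rw [R.nvec_split' f g, inner_add_right]
    linarith
  obtain ⟨β, hβ, hupβ, hipβ⟩ := R.exists_neg_inner h5
  exact ⟨β, hβ, by omega, hipβ⟩

/-- in the absence of additive moves on `y`, there is a subtractive move on `x` -/
lemma hard_witness' {f g : V → ℕ}
    (hnA2 : ∀ β ∈ R.simple, g β < f β → 0 ≤ ⟪β, R.nvec g⟫)
    (hw : ∃ β ∈ R.simple, g β < f β) :
    ∃ β ∈ R.simple, g β < f β ∧ 0 < ⟪β, R.nvec f⟫ := by
  obtain ⟨βp, hβp, hβplt⟩ := hw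
  have h1 : 0 ≤ ⟪R.nvec (fun δ => f δ - min (f δ) (g δ)), R.nvec g⟫ := by
    rw [R.inner_nvec_left]
    apply Finset.sum_nonneg
    intro δ hδ
    rcases Nat.eq_zero_or_pos (f δ - min (f δ) (g δ)) with h0 | h0
    · simp [h0]
    · exact mul_nonneg (Nat.cast_nonneg _) (hnA2 δ hδ (by omega))
  have h2 : 0 < ⟪R.nvec (fun δ => f δ - min (f δ) (g δ)),
      R.nvec (fun δ => f δ - min (f δ) (g δ))⟫ :=
    inner_self_pos_of_ne (R.up_ne_zero hβp hβplt)
  rw [R.nvec_split' f g, inner_add_right] at h1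
  have h4 := R.updn_nonpos f g
  have h5 : 0 < ⟪R.nvec (fun δ => f δ - min (f δ) (g δ)), R.nvec f⟫ := by
    rw [R.nvec_split f g, inner_add_right]
    linarith
  obtain ⟨β, hβ, hupβ, hipβ⟩ := R.exists_pos_inner h5
  exact ⟨β, hβ, by omega, hipβ⟩

/-- the two-step argument recovering the min -/
lemma two_step_min {α : V} (hα : α ∈ R.simple) {i N : ℕ} (hi : 1 ≤ i)
    (IH : R.LP α i N) {x y β : V} (hx : x ∈ R.pos) (hy : y ∈ R.pos)
    (hxa : R.coeff x α = i) (hya : R.coeff y α = i) (hβ : β ∈ R.simple)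
    (hlt : R.coeff y β < R.coeff x β) (hip : ⟪β, y⟫ < 0)
    (hup2 : 2 ≤ ∑ δ ∈ R.simple, (R.coeff x δ - min (R.coeff x δ) (R.coeff y δ)))
    (hmeas : R.meas x y ≤ N + 1) :
    R.nvec (fun δ => min (R.coeff x δ) (R.coeff y δ)) ∈ R.pos := by
  have hβα : β ≠ α := by
    intro h
    rw [h, hxa, hya] at hlt
    omega
  obtain ⟨W1, _⟩ := R.max_move_add hα hi IH hx hy hxa hya hβ hlt hip hmeas
  have hcw := R.nvec_coeff W1
  have hwa : R.coeff (R.nvec fun δ => min (R.coeff x δ) (R.coeff y δ)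
      + (if δ = β then 1 else 0)) α = i := by
    rw [hcw α hα, if_neg (Ne.symm hβα), hxa]
    simp only [hya]
    omega
  have hmeas2 : R.meas (R.nvec fun δ => min (R.coeff x δ) (R.coeff y δ)
      + (if δ = β then 1 else 0)) y ≤ N := by
    have hbound : R.meas (R.nvec fun δ => min (R.coeff x δ) (R.coeff y δ)
        + (if δ = β then 1 else 0)) y
        ≤ ∑ δ ∈ R.simple, ((R.coeff y δ - min (R.coeff x δ) (R.coeff y δ))
          + (if δ = β then 1 else 0)) := by
      apply Finset.sum_le_sum
      intro δ hδ
      rw [hcw δ hδ]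
      by_cases hdb : δ = β
      · subst hdb; simp only [if_pos]; omega
      · simp only [if_neg hdb]; omega
    have hsum1 : ∑ δ ∈ R.simple, ((R.coeff y δ - min (R.coeff x δ) (R.coeff y δ))
        + (if δ = β then 1 else 0))
        = (∑ δ ∈ R.simple, (R.coeff y δ - min (R.coeff x δ) (R.coeff y δ))) + 1 := by
      rw [Finset.sum_add_distrib]
      congr 1
      rw [Finset.sum_ite_eq' R.simple β (fun _ => 1), if_pos hβ]
    have hme := R.meas_eq x y
    omega
  obtain ⟨Q1, _⟩ := IH _ y W1 hy hwa hya hmeas2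
  rw [← R.nvec_congr (f := fun δ => min (R.coeff (R.nvec fun δ =>
      min (R.coeff x δ) (R.coeff y δ) + (if δ = β then 1 else 0)) δ) (R.coeff y δ))
    (by intro δ hδ
        rw [hcw δ hδ]
        by_cases hdb : δ = β
        · subst hdb; simp only [if_pos]; omega
        · simp only [if_neg hdb]; omega)]
  exact Q1

/-- the two-step argument recovering the max -/
lemma two_step_max {α : V} (hα : α ∈ R.simple) {i N : ℕ} (hi : 1 ≤ i)
    (IH : R.LP α i N) {x y β : V} (hx : x ∈ R.pos) (hy : y ∈ R.pos)
    (hxa : R.coeff x α = i) (hya : R.coeff y α = i) (hβ : β ∈ R.simple)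
    (hlt : R.coeff y β < R.coeff x β) (hip : 0 < ⟪β, x⟫)
    (hup2 : 2 ≤ ∑ δ ∈ R.simple, (R.coeff x δ - min (R.coeff x δ) (R.coeff y δ)))
    (hmeas : R.meas x y ≤ N + 1) :
    R.nvec (fun δ => max (R.coeff x δ) (R.coeff y δ)) ∈ R.pos := by
  have hβα : β ≠ α := by
    intro h
    rw [h, hxa, hya] at hlt
    omega
  obtain ⟨_, W2⟩ := R.min_move_sub hα hi IH hx hy hxa hya hβ hlt hip hmeas
  have hcu := R.nvec_coeff W2
  have hua : R.coeff (R.nvec fun δ => max (R.coeff x δ) (R.coeff y δ)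
      - (if δ = β then 1 else 0)) α = i := by
    rw [hcu α hα, if_neg (Ne.symm hβα), hxa]
    simp only [hya]
    omega
  have hmeas2 : R.meas x (R.nvec fun δ => max (R.coeff x δ) (R.coeff y δ)
      - (if δ = β then 1 else 0)) ≤ N := by
    have hbound : R.meas x (R.nvec fun δ => max (R.coeff x δ) (R.coeff y δ)
        - (if δ = β then 1 else 0))
        ≤ ∑ δ ∈ R.simple, ((R.coeff y δ - min (R.coeff x δ) (R.coeff y δ))
          + (if δ = β then 1 else 0)) := by
      apply Finset.sum_le_sum
      intro δ hδ
      rw [hcu δ hδ]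
      by_cases hdb : δ = β
      · subst hdb; simp only [if_pos]; omega
      · simp only [if_neg hdb]; omega
    have hsum1 : ∑ δ ∈ R.simple, ((R.coeff y δ - min (R.coeff x δ) (R.coeff y δ))
        + (if δ = β then 1 else 0))
        = (∑ δ ∈ R.simple, (R.coeff y δ - min (R.coeff x δ) (R.coeff y δ))) + 1 := by
      rw [Finset.sum_add_distrib]
      congr 1
      rw [Finset.sum_ite_eq' R.simple β (fun _ => 1), if_pos hβ]
    have hme := R.meas_eq x y
    omega
  obtain ⟨_, Q2⟩ := IH x _ hx W2 hxa hua hmeas2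
  rw [← R.nvec_congr (f := fun δ => max (R.coeff x δ) (R.coeff (R.nvec fun δ =>
      max (R.coeff x δ) (R.coeff y δ) - (if δ = β then 1 else 0)) δ))
    (by intro δ hδ
        rw [hcu δ hδ]
        by_cases hdb : δ = β
        · subst hdb; simp only [if_pos]; omega
        · simp only [if_neg hdb]; omega)]
  exact Q2

end SimpleRS

namespace SimpleRS

open scoped Classical

variable {V : Type*} [NormedAddCommGroup V] [InnerProductSpace ℝ V] (R : SimpleRS V)

lemma core {α : V} (hα : α ∈ R.simple) {i : ℕ} (hi : 1 ≤ i) :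
    ∀ N : ℕ, R.LP α i N := by
  intro N
  induction N with
  | zero =>
    intro x y hx hy hxa hya hmeas
    have hm0 : R.meas x y = 0 := Nat.le_zero.mp hmeas
    have h0 : ∀ δ ∈ R.simple, R.coeff x δ = R.coeff y δ := by
      intro δ hδ
      have := Finset.sum_eq_zero_iff.mp hm0 δ hδ
      omega
    constructor
    · rw [R.nvec_congr (g := R.coeff x) (by intro δ hδ; have := h0 δ hδ; omega),
        ← R.expand' hx]
      exact hx
    · rw [R.nvec_congr (g := R.coeff x) (by intro δ hδ; have := h0 δ hδ; omega),
        ← R.expand' hx]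
      exact hx
  | succ N ih =>
    intro x y hx hy hxa hya hmeas
    by_cases hc1 : ∀ δ ∈ R.simple, R.coeff x δ ≤ R.coeff y δ
    · constructor
      · rw [R.nvec_congr (g := R.coeff x) (by intro δ hδ; have := hc1 δ hδ; omega),
          ← R.expand' hx]
        exact hx
      · rw [R.nvec_congr (g := R.coeff y) (by intro δ hδ; have := hc1 δ hδ; omega),
          ← R.expand' hy]
        exact hy
    by_cases hc2 : ∀ δ ∈ R.simple, R.coeff y δ ≤ R.coeff x δ
    · constructor
      · rw [R.nvec_congr (g := R.coeff y) (by intro δ hδ; have := hc2 δ hδ; omega),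
          ← R.expand' hy]
        exact hy
      · rw [R.nvec_congr (g := R.coeff x) (by intro δ hδ; have := hc2 δ hδ; omega),
          ← R.expand' hx]
        exact hx
    push_neg at hc1 hc2
    obtain ⟨βp, hβps, hβplt⟩ := hc1
    obtain ⟨βm, hβms, hβmlt⟩ := hc2
    constructor
    · -- MIN
      by_cases hA1 : ∃ β ∈ R.simple, R.coeff y β < R.coeff x β ∧ 0 < ⟪β, x⟫
      · obtain ⟨β, hβ, hβlt, hβx⟩ := hA1
        exact (R.min_move_sub hα hi ih hx hy hxa hya hβ hβlt hβx hmeas).1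
      by_cases hB1 : ∃ β ∈ R.simple, R.coeff x β < R.coeff y β ∧ 0 < ⟪β, y⟫
      · obtain ⟨β, hβ, hβlt, hβy⟩ := hB1
        have := (R.min_move_sub hα hi ih hy hx hya hxa hβ hβlt hβy
          (by rw [R.meas_comm]; exact hmeas)).1
        rw [R.nvec_congr (f := fun δ => min (R.coeff y δ) (R.coeff x δ))
          (g := fun δ => min (R.coeff x δ) (R.coeff y δ))
          (by intro δ _; omega)] at this
        exact this
      push_neg at hA1 hB1
      obtain ⟨β, hβ, hβlt, hβy⟩ := R.hard_witness (f := R.coeff x) (g := R.coeff y)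
        (by intro β' hβ' hlt'; rw [← R.expand' hx]; exact hA1 β' hβ' hlt')
        ⟨βp, hβps, hβplt⟩
      rw [← R.expand' hy] at hβy
      by_cases hup2 : 2 ≤ ∑ δ ∈ R.simple, (R.coeff x δ - min (R.coeff x δ) (R.coeff y δ))
      · exact R.two_step_min hα hi ih hx hy hxa hya hβ hβlt hβy hup2 hmeas
      by_cases hdn2 : 2 ≤ ∑ δ ∈ R.simple, (R.coeff y δ - min (R.coeff x δ) (R.coeff y δ))
      · obtain ⟨β', hβ', hβ'lt, hβ'x⟩ := R.hard_witness (f := R.coeff y) (g := R.coeff x)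
          (by intro β' hβ' hlt'; rw [← R.expand' hy]; exact hB1 β' hβ' hlt')
          ⟨βm, hβms, hβmlt⟩
        rw [← R.expand' hx] at hβ'x
        have hdn2' : 2 ≤ ∑ δ ∈ R.simple, (R.coeff y δ - min (R.coeff y δ) (R.coeff x δ)) := by
          have e : (∑ δ ∈ R.simple, (R.coeff y δ - min (R.coeff y δ) (R.coeff x δ)))
              = ∑ δ ∈ R.simple, (R.coeff y δ - min (R.coeff x δ) (R.coeff y δ)) :=
            Finset.sum_congr rfl (by intro δ _; omega)
          omega
        have := R.two_step_min hα hi ih hy hx hya hxa hβ' hβ'lt hβ'x hdn2'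
          (by rw [R.meas_comm]; exact hmeas)
        rw [R.nvec_congr (f := fun δ => min (R.coeff y δ) (R.coeff x δ))
          (g := fun δ => min (R.coeff x δ) (R.coeff y δ))
          (by intro δ _; omega)] at this
        exact this
      · exfalso
        push_neg at hup2 hdn2
        have hup_ge : R.coeff x βp - min (R.coeff x βp) (R.coeff y βp)
            ≤ ∑ δ ∈ R.simple, (R.coeff x δ - min (R.coeff x δ) (R.coeff y δ)) :=
          Finset.single_le_sum (f := fun δ => R.coeff x δ - min (R.coeff x δ) (R.coeff y δ))
            (fun δ _ => Nat.zero_le _) hβps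
        have hdn_ge : R.coeff y βm - min (R.coeff x βm) (R.coeff y βm)
            ≤ ∑ δ ∈ R.simple, (R.coeff y δ - min (R.coeff x δ) (R.coeff y δ)) :=
          Finset.single_le_sum (f := fun δ => R.coeff y δ - min (R.coeff x δ) (R.coeff y δ))
            (fun δ _ => Nat.zero_le _) hβms
        have hup1 : ∑ δ ∈ R.simple, (R.coeff x δ - min (R.coeff x δ) (R.coeff y δ)) = 1 := by
          omega
        have hdn1 : ∑ δ ∈ R.simple, (R.coeff y δ - min (R.coeff x δ) (R.coeff y δ)) = 1 := by
          omega
        obtain ⟨β₁, hβ₁s, hβ₁v, hβ₁o⟩ := R.sum_eq_one_support hup1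
        obtain ⟨β₂, hβ₂s, hβ₂v, hβ₂o⟩ := R.sum_eq_one_support hdn1
        have hβ₁v' : R.coeff x β₁ - min (R.coeff x β₁) (R.coeff y β₁) = 1 := hβ₁v
        have hβ₂v' : R.coeff y β₂ - min (R.coeff x β₂) (R.coeff y β₂) = 1 := hβ₂v
        have h1lt : R.coeff y β₁ < R.coeff x β₁ := by omega
        have h2lt : R.coeff x β₂ < R.coeff y β₂ := by omega
        have hne : β₁ ≠ β₂ := by
          intro h
          rw [h] at h1lt
          omega
        have hβ₁α : β₁ ≠ α := by
          intro h
          rw [h, hxa, hya] at h1lt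
          omega
        have hxid : x = R.nvec (fun δ => min (R.coeff x δ) (R.coeff y δ)) + β₁ := by
          calc x = R.nvec (R.coeff x) := R.expand' hx
            _ = R.nvec (fun δ => min (R.coeff x δ) (R.coeff y δ))
                + R.nvec (fun δ => R.coeff x δ - min (R.coeff x δ) (R.coeff y δ)) :=
              R.nvec_split (R.coeff x) (R.coeff y)
            _ = R.nvec (fun δ => min (R.coeff x δ) (R.coeff y δ)) + β₁ := by
              rw [R.nvec_congr (f := fun δ => R.coeff x δ - min (R.coeff x δ) (R.coeff y δ))
                (g := fun δ => if δ = β₁ then 1 else 0)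
                (by intro δ hδ
                    by_cases hdb : δ = β₁
                    · subst hdb
                      rw [if_pos rfl]
                      exact hβ₁v'
                    · rw [if_neg hdb]
                      exact hβ₁o δ hδ hdb), R.nvec_single hβ₁s]
        have hyid : y = R.nvec (fun δ => min (R.coeff x δ) (R.coeff y δ)) + β₂ := by
          calc y = R.nvec (R.coeff y) := R.expand' hy
            _ = R.nvec (fun δ => min (R.coeff x δ) (R.coeff y δ))
                + R.nvec (fun δ => R.coeff y δ - min (R.coeff x δ) (R.coeff y δ)) :=
              R.nvec_split' (R.coeff x) (R.coeff y)
            _ = R.nvec (fun δ => min (R.coeff x δ) (R.coeff y δ)) + β₂ := by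
              rw [R.nvec_congr (f := fun δ => R.coeff y δ - min (R.coeff x δ) (R.coeff y δ))
                (g := fun δ => if δ = β₂ then 1 else 0)
                (by intro δ hδ
                    by_cases hdb : δ = β₂
                    · subst hdb
                      rw [if_pos rfl]
                      exact hβ₂v'
                    · rw [if_neg hdb]
                      exact hβ₂o δ hδ hdb), R.nvec_single hβ₂s]
        have hdiff : x - y = β₁ - β₂ := by
          have h := congrArg₂ (fun a b : V => a - b) hxid hyid
          rw [h]
          abel
        have hxy := R.layer_inner_nonpos hx hy hα hi hxa hya hβ₁s hβ₂s h1lt h2lt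
        exact R.terminal_min hα hi hx hy hxa hya hβ₁s hβ₂s hne hβ₁α hdiff hxy
          (hA1 β₁ hβ₁s h1lt) (hB1 β₂ hβ₂s h2lt)
    · -- MAX
      by_cases hA2 : ∃ β ∈ R.simple, R.coeff y β < R.coeff x β ∧ ⟪β, y⟫ < 0
      · obtain ⟨β, hβ, hβlt, hβy⟩ := hA2
        exact (R.max_move_add hα hi ih hx hy hxa hya hβ hβlt hβy hmeas).2
      by_cases hB2 : ∃ β ∈ R.simple, R.coeff x β < R.coeff y β ∧ ⟪β, x⟫ < 0
      · obtain ⟨β, hβ, hβlt, hβx⟩ := hB2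
        have := (R.max_move_add hα hi ih hy hx hya hxa hβ hβlt hβx
          (by rw [R.meas_comm]; exact hmeas)).2
        rw [R.nvec_congr (f := fun δ => max (R.coeff y δ) (R.coeff x δ))
          (g := fun δ => max (R.coeff x δ) (R.coeff y δ))
          (by intro δ _; omega)] at this
        exact this
      push_neg at hA2 hB2
      obtain ⟨β, hβ, hβlt, hβx⟩ := R.hard_witness' (f := R.coeff x) (g := R.coeff y)
        (by intro β' hβ' hlt'; rw [← R.expand' hy]; exact hA2 β' hβ' hlt')
        ⟨βp, hβps, hβplt⟩
      rw [← R.expand' hx] at hβx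
      by_cases hup2 : 2 ≤ ∑ δ ∈ R.simple, (R.coeff x δ - min (R.coeff x δ) (R.coeff y δ))
      · exact R.two_step_max hα hi ih hx hy hxa hya hβ hβlt hβx hup2 hmeas
      by_cases hdn2 : 2 ≤ ∑ δ ∈ R.simple, (R.coeff y δ - min (R.coeff x δ) (R.coeff y δ))
      · obtain ⟨β', hβ', hβ'lt, hβ'y⟩ := R.hard_witness' (f := R.coeff y) (g := R.coeff x)
          (by intro β' hβ' hlt'; rw [← R.expand' hx]; exact hB2 β' hβ' hlt')
          ⟨βm, hβms, hβmlt⟩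
        rw [← R.expand' hy] at hβ'y
        have hdn2' : 2 ≤ ∑ δ ∈ R.simple, (R.coeff y δ - min (R.coeff y δ) (R.coeff x δ)) := by
          have e : (∑ δ ∈ R.simple, (R.coeff y δ - min (R.coeff y δ) (R.coeff x δ)))
              = ∑ δ ∈ R.simple, (R.coeff y δ - min (R.coeff x δ) (R.coeff y δ)) :=
            Finset.sum_congr rfl (by intro δ _; omega)
          omega
        have := R.two_step_max hα hi ih hy hx hya hxa hβ' hβ'lt hβ'y hdn2'
          (by rw [R.meas_comm]; exact hmeas)
        rw [R.nvec_congr (f := fun δ => max (R.coeff y δ) (R.coeff x δ))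
          (g := fun δ => max (R.coeff x δ) (R.coeff y δ))
          (by intro δ _; omega)] at this
        exact this
      · exfalso
        push_neg at hup2 hdn2
        have hup_ge : R.coeff x βp - min (R.coeff x βp) (R.coeff y βp)
            ≤ ∑ δ ∈ R.simple, (R.coeff x δ - min (R.coeff x δ) (R.coeff y δ)) :=
          Finset.single_le_sum (f := fun δ => R.coeff x δ - min (R.coeff x δ) (R.coeff y δ))
            (fun δ _ => Nat.zero_le _) hβps
        have hdn_ge : R.coeff y βm - min (R.coeff x βm) (R.coeff y βm)
            ≤ ∑ δ ∈ R.simple, (R.coeff y δ - min (R.coeff x δ) (R.coeff y δ)) :=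
          Finset.single_le_sum (f := fun δ => R.coeff y δ - min (R.coeff x δ) (R.coeff y δ))
            (fun δ _ => Nat.zero_le _) hβms
        have hup1 : ∑ δ ∈ R.simple, (R.coeff x δ - min (R.coeff x δ) (R.coeff y δ)) = 1 := by
          omega
        have hdn1 : ∑ δ ∈ R.simple, (R.coeff y δ - min (R.coeff x δ) (R.coeff y δ)) = 1 := by
          omega
        obtain ⟨β₁, hβ₁s, hβ₁v, hβ₁o⟩ := R.sum_eq_one_support hup1
        obtain ⟨β₂, hβ₂s, hβ₂v, hβ₂o⟩ := R.sum_eq_one_support hdn1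
        have hβ₁v' : R.coeff x β₁ - min (R.coeff x β₁) (R.coeff y β₁) = 1 := hβ₁v
        have hβ₂v' : R.coeff y β₂ - min (R.coeff x β₂) (R.coeff y β₂) = 1 := hβ₂v
        have h1lt : R.coeff y β₁ < R.coeff x β₁ := by omega
        have h2lt : R.coeff x β₂ < R.coeff y β₂ := by omega
        have hne : β₁ ≠ β₂ := by
          intro h
          rw [h] at h1lt
          omega
        have hβ₁α : β₁ ≠ α := by
          intro h
          rw [h, hxa, hya] at h1lt
          omega
        have hxid : x = R.nvec (fun δ => min (R.coeff x δ) (R.coeff y δ)) + β₁ := by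
          calc x = R.nvec (R.coeff x) := R.expand' hx
            _ = R.nvec (fun δ => min (R.coeff x δ) (R.coeff y δ))
                + R.nvec (fun δ => R.coeff x δ - min (R.coeff x δ) (R.coeff y δ)) :=
              R.nvec_split (R.coeff x) (R.coeff y)
            _ = R.nvec (fun δ => min (R.coeff x δ) (R.coeff y δ)) + β₁ := by
              rw [R.nvec_congr (f := fun δ => R.coeff x δ - min (R.coeff x δ) (R.coeff y δ))
                (g := fun δ => if δ = β₁ then 1 else 0)
                (by intro δ hδ
                    by_cases hdb : δ = β₁
                    · subst hdb
                      rw [if_pos rfl]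
                      exact hβ₁v'
                    · rw [if_neg hdb]
                      exact hβ₁o δ hδ hdb), R.nvec_single hβ₁s]
        have hyid : y = R.nvec (fun δ => min (R.coeff x δ) (R.coeff y δ)) + β₂ := by
          calc y = R.nvec (R.coeff y) := R.expand' hy
            _ = R.nvec (fun δ => min (R.coeff x δ) (R.coeff y δ))
                + R.nvec (fun δ => R.coeff y δ - min (R.coeff x δ) (R.coeff y δ)) :=
              R.nvec_split' (R.coeff x) (R.coeff y)
            _ = R.nvec (fun δ => min (R.coeff x δ) (R.coeff y δ)) + β₂ := by
              rw [R.nvec_congr (f := fun δ => R.coeff y δ - min (R.coeff x δ) (R.coeff y δ))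
                (g := fun δ => if δ = β₂ then 1 else 0)
                (by intro δ hδ
                    by_cases hdb : δ = β₂
                    · subst hdb
                      rw [if_pos rfl]
                      exact hβ₂v'
                    · rw [if_neg hdb]
                      exact hβ₂o δ hδ hdb), R.nvec_single hβ₂s]
        have hdiff : x - y = β₁ - β₂ := by
          have h := congrArg₂ (fun a b : V => a - b) hxid hyid
          rw [h]
          abel
        have hxy := R.layer_inner_nonpos hx hy hα hi hxa hya hβ₁s hβ₂s h1lt h2lt
        exact R.terminal_max hα hi hx hy hxa hya hβ₁s hβ₂s hne hβ₁α hdiff hxy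
          (hA2 β₁ hβ₁s h1lt) (hB2 β₂ hβ₂s h2lt)

end SimpleRS

/-- for a simple root `α` and `i ≥ 1`, if `Δ_α(i) = {γ ∈ Δ⁺ : ht_α(γ) = i}`
is nonempty then it is a modular lattice under the root order: it has a unique minimal
(= least) and a unique maximal (= greatest) element, and for `γ₁, γ₂ ∈ Δ_α(i)` the
coefficientwise min and max are roots in `Δ_α(i)` giving the meet and the join. -/
theorem stmt6 {V : Type*} [NormedAddCommGroup V] [InnerProductSpace ℝ V]
    (R : SimpleRS V) {α : V} (hα : α ∈ R.simple) {i : ℕ} (hi : 1 ≤ i)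
    (hne : ∃ γ ∈ R.pos, R.coeff γ α = i) :
    (∃ m, (m ∈ R.pos ∧ R.coeff m α = i) ∧
        ∀ γ, (γ ∈ R.pos ∧ R.coeff γ α = i) → R.rle m γ) ∧
    (∃ M, (M ∈ R.pos ∧ R.coeff M α = i) ∧
        ∀ γ, (γ ∈ R.pos ∧ R.coeff γ α = i) → R.rle γ M) ∧
    (∀ γ₁ γ₂, (γ₁ ∈ R.pos ∧ R.coeff γ₁ α = i) → (γ₂ ∈ R.pos ∧ R.coeff γ₂ α = i) →
      ((∑ β ∈ R.simple, ((min (R.coeff γ₁ β) (R.coeff γ₂ β) : ℕ) : ℝ) • β) ∈ R.pos ∧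
       R.coeff (∑ β ∈ R.simple, ((min (R.coeff γ₁ β) (R.coeff γ₂ β) : ℕ) : ℝ) • β) α = i ∧
       R.rle (∑ β ∈ R.simple, ((min (R.coeff γ₁ β) (R.coeff γ₂ β) : ℕ) : ℝ) • β) γ₁ ∧
       R.rle (∑ β ∈ R.simple, ((min (R.coeff γ₁ β) (R.coeff γ₂ β) : ℕ) : ℝ) • β) γ₂ ∧
       (∑ β ∈ R.simple, ((max (R.coeff γ₁ β) (R.coeff γ₂ β) : ℕ) : ℝ) • β) ∈ R.pos ∧
       R.coeff (∑ β ∈ R.simple, ((max (R.coeff γ₁ β) (R.coeff γ₂ β) : ℕ) : ℝ) • β) α = i ∧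
       R.rle γ₁ (∑ β ∈ R.simple, ((max (R.coeff γ₁ β) (R.coeff γ₂ β) : ℕ) : ℝ) • β) ∧
       R.rle γ₂ (∑ β ∈ R.simple, ((max (R.coeff γ₁ β) (R.coeff γ₂ β) : ℕ) : ℝ) • β))) := by
  classical
  -- the two lattice operations, packaged
  have hcore : ∀ x y : V, x ∈ R.pos → y ∈ R.pos → R.coeff x α = i → R.coeff y α = i →
      R.nvec (fun δ => min (R.coeff x δ) (R.coeff y δ)) ∈ R.pos ∧
      R.nvec (fun δ => max (R.coeff x δ) (R.coeff y δ)) ∈ R.pos := by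
    intro x y hx hy hxa hya
    exact R.core hα hi (R.meas x y) x y hx hy hxa hya le_rfl
  have hminco : ∀ x y : V, x ∈ R.pos → y ∈ R.pos → R.coeff x α = i → R.coeff y α = i →
      ∀ δ ∈ R.simple,
        R.coeff (R.nvec (fun δ => min (R.coeff x δ) (R.coeff y δ))) δ
          = min (R.coeff x δ) (R.coeff y δ) := by
    intro x y hx hy hxa hya
    exact R.nvec_coeff (hcore x y hx hy hxa hya).1
  have hmaxco : ∀ x y : V, x ∈ R.pos → y ∈ R.pos → R.coeff x α = i → R.coeff y α = i →
      ∀ δ ∈ R.simple,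
        R.coeff (R.nvec (fun δ => max (R.coeff x δ) (R.coeff y δ))) δ
          = max (R.coeff x δ) (R.coeff y δ) := by
    intro x y hx hy hxa hya
    exact R.nvec_coeff (hcore x y hx hy hxa hya).2
  obtain ⟨γ₀, hγ₀p, hγ₀a⟩ := hne
  refine ⟨?_, ?_, ?_⟩
  · -- least element
    obtain ⟨m, hmS, hmin⟩ := Finset.exists_min_image
      (R.pos.filter (fun γ => R.coeff γ α = i))
      (fun γ => ∑ β ∈ R.simple, R.coeff γ β)
      ⟨γ₀, Finset.mem_filter.mpr ⟨hγ₀p, hγ₀a⟩⟩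
    obtain ⟨hmp, hma⟩ := Finset.mem_filter.mp hmS
    refine ⟨m, ⟨hmp, hma⟩, ?_⟩
    rintro γ ⟨hγp, hγa⟩
    have hwp := (hcore m γ hmp hγp hma hγa).1
    have hwc := hminco m γ hmp hγp hma hγa
    have hwa : R.coeff (R.nvec (fun δ => min (R.coeff m δ) (R.coeff γ δ))) α = i := by
      rw [hwc α hα, hma, hγa]
      omega
    have hwS : R.nvec (fun δ => min (R.coeff m δ) (R.coeff γ δ))
        ∈ R.pos.filter (fun γ => R.coeff γ α = i) :=
      Finset.mem_filter.mpr ⟨hwp, hwa⟩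
    have h1 := hmin _ hwS
    have h2 : ∑ β ∈ R.simple, R.coeff (R.nvec (fun δ => min (R.coeff m δ) (R.coeff γ δ))) β
        = ∑ β ∈ R.simple, min (R.coeff m β) (R.coeff γ β) :=
      Finset.sum_congr rfl (fun β hβ => hwc β hβ)
    have h3 : ∑ β ∈ R.simple, min (R.coeff m β) (R.coeff γ β)
        ≤ ∑ β ∈ R.simple, R.coeff m β :=
      Finset.sum_le_sum (fun β _ => by omega)
    have h4 : ∀ β ∈ R.simple, min (R.coeff m β) (R.coeff γ β) = R.coeff m β := by
      have := (Finset.sum_eq_sum_iff_of_le (s := R.simple)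
        (f := fun β => min (R.coeff m β) (R.coeff γ β)) (g := fun β => R.coeff m β)
        (fun β _ => by omega)).mp (by omega)
      intro β hβ
      exact this β hβ
    have hle : ∀ β ∈ R.simple, R.coeff m β ≤ R.coeff γ β := by
      intro β hβ
      have := h4 β hβ
      omega
    refine ⟨fun β => R.coeff γ β - R.coeff m β, ?_⟩
    have h5 : γ - m = R.nvec (R.coeff γ) - R.nvec (R.coeff m) := by
      rw [← R.expand' hγp, ← R.expand' hmp]
    rw [h5, R.nvec_sub hle]
    rfl
  · -- greatest element
    obtain ⟨M, hMS, hmax⟩ := Finset.exists_max_image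
      (R.pos.filter (fun γ => R.coeff γ α = i))
      (fun γ => ∑ β ∈ R.simple, R.coeff γ β)
      ⟨γ₀, Finset.mem_filter.mpr ⟨hγ₀p, hγ₀a⟩⟩
    obtain ⟨hMp, hMa⟩ := Finset.mem_filter.mp hMS
    refine ⟨M, ⟨hMp, hMa⟩, ?_⟩
    rintro γ ⟨hγp, hγa⟩
    have hwp := (hcore M γ hMp hγp hMa hγa).2
    have hwc := hmaxco M γ hMp hγp hMa hγa
    have hwa : R.coeff (R.nvec (fun δ => max (R.coeff M δ) (R.coeff γ δ))) α = i := by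
      rw [hwc α hα, hMa, hγa]
      omega
    have hwS : R.nvec (fun δ => max (R.coeff M δ) (R.coeff γ δ))
        ∈ R.pos.filter (fun γ => R.coeff γ α = i) :=
      Finset.mem_filter.mpr ⟨hwp, hwa⟩
    have h1 := hmax _ hwS
    have h2 : ∑ β ∈ R.simple, R.coeff (R.nvec (fun δ => max (R.coeff M δ) (R.coeff γ δ))) β
        = ∑ β ∈ R.simple, max (R.coeff M β) (R.coeff γ β) :=
      Finset.sum_congr rfl (fun β hβ => hwc β hβ)
    have h3 : ∑ β ∈ R.simple, R.coeff M β
        ≤ ∑ β ∈ R.simple, max (R.coeff M β) (R.coeff γ β) :=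
      Finset.sum_le_sum (fun β _ => by omega)
    have h4 : ∀ β ∈ R.simple, max (R.coeff M β) (R.coeff γ β) = R.coeff M β := by
      have := (Finset.sum_eq_sum_iff_of_le (s := R.simple)
        (f := fun β => R.coeff M β) (g := fun β => max (R.coeff M β) (R.coeff γ β))
        (fun β _ => by omega)).mp (by omega)
      intro β hβ
      exact (this β hβ).symm
    have hle : ∀ β ∈ R.simple, R.coeff γ β ≤ R.coeff M β := by
      intro β hβ
      have := h4 β hβ
      omega
    refine ⟨fun β => R.coeff M β - R.coeff γ β, ?_⟩
    have h5 : M - γ = R.nvec (R.coeff M) - R.nvec (R.coeff γ) := by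
      rw [← R.expand' hγp, ← R.expand' hMp]
    rw [h5, R.nvec_sub hle]
    rfl
  · -- lattice operations
    rintro γ₁ γ₂ ⟨h1p, h1a⟩ ⟨h2p, h2a⟩
    have hminmem := (hcore γ₁ γ₂ h1p h2p h1a h2a).1
    have hmaxmem := (hcore γ₁ γ₂ h1p h2p h1a h2a).2
    have hwc := hminco γ₁ γ₂ h1p h2p h1a h2a
    have hWc := hmaxco γ₁ γ₂ h1p h2p h1a h2a
    refine ⟨hminmem, ?_, ?_, ?_, hmaxmem, ?_, ?_, ?_⟩
    · rw [show R.coeff (∑ β ∈ R.simple,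
          ((min (R.coeff γ₁ β) (R.coeff γ₂ β) : ℕ) : ℝ) • β) α
          = min (R.coeff γ₁ α) (R.coeff γ₂ α) from hwc α hα, h1a, h2a]
      omega
    · refine ⟨fun β => R.coeff γ₁ β - min (R.coeff γ₁ β) (R.coeff γ₂ β), ?_⟩
      have h5 : γ₁ - R.nvec (fun δ => min (R.coeff γ₁ δ) (R.coeff γ₂ δ))
          = R.nvec (R.coeff γ₁) - R.nvec (fun δ => min (R.coeff γ₁ δ) (R.coeff γ₂ δ)) := by
        rw [← R.expand' h1p]
      rw [show (∑ β ∈ R.simple, ((min (R.coeff γ₁ β) (R.coeff γ₂ β) : ℕ) : ℝ) • β)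
          = R.nvec (fun δ => min (R.coeff γ₁ δ) (R.coeff γ₂ δ)) from rfl,
        h5, R.nvec_sub (by intro β _; omega)]
      rfl
    · refine ⟨fun β => R.coeff γ₂ β - min (R.coeff γ₁ β) (R.coeff γ₂ β), ?_⟩
      have h5 : γ₂ - R.nvec (fun δ => min (R.coeff γ₁ δ) (R.coeff γ₂ δ))
          = R.nvec (R.coeff γ₂) - R.nvec (fun δ => min (R.coeff γ₁ δ) (R.coeff γ₂ δ)) := by
        rw [← R.expand' h2p]
      rw [show (∑ β ∈ R.simple, ((min (R.coeff γ₁ β) (R.coeff γ₂ β) : ℕ) : ℝ) • β)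
          = R.nvec (fun δ => min (R.coeff γ₁ δ) (R.coeff γ₂ δ)) from rfl,
        h5, R.nvec_sub (by intro β _; omega)]
      rfl
    · rw [show R.coeff (∑ β ∈ R.simple,
          ((max (R.coeff γ₁ β) (R.coeff γ₂ β) : ℕ) : ℝ) • β) α
          = max (R.coeff γ₁ α) (R.coeff γ₂ α) from hWc α hα, h1a, h2a]
      omega
    · refine ⟨fun β => max (R.coeff γ₁ β) (R.coeff γ₂ β) - R.coeff γ₁ β, ?_⟩
      have h5 : R.nvec (fun δ => max (R.coeff γ₁ δ) (R.coeff γ₂ δ)) - γ₁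
          = R.nvec (fun δ => max (R.coeff γ₁ δ) (R.coeff γ₂ δ)) - R.nvec (R.coeff γ₁) := by
        rw [← R.expand' h1p]
      rw [show (∑ β ∈ R.simple, ((max (R.coeff γ₁ β) (R.coeff γ₂ β) : ℕ) : ℝ) • β)
          = R.nvec (fun δ => max (R.coeff γ₁ δ) (R.coeff γ₂ δ)) from rfl,
        h5, R.nvec_sub (by intro β _; omega)]
      rfl
    · refine ⟨fun β => max (R.coeff γ₁ β) (R.coeff γ₂ β) - R.coeff γ₂ β, ?_⟩
      have h5 : R.nvec (fun δ => max (R.coeff γ₁ δ) (R.coeff γ₂ δ)) - γ₂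
          = R.nvec (fun δ => max (R.coeff γ₁ δ) (R.coeff γ₂ δ)) - R.nvec (R.coeff γ₂) := by
        rw [← R.expand' h2p]
      rw [show (∑ β ∈ R.simple, ((max (R.coeff γ₁ β) (R.coeff γ₂ β) : ℕ) : ℝ) • β)
          = R.nvec (fun δ => max (R.coeff γ₁ δ) (R.coeff γ₂ δ)) from rfl,
        h5, R.nvec_sub (by intro β _; omega)]
      rfl
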